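/- Let P = ⟨D,Γ,Δ⟩ be a planning problem in action language B with consistent action theory, let φ be a basic desire formula, and let S be an answer set of the program Π(P,n) ∪ Π(φ) ∪ Π_pref. Then holds(sat(φ),0) ∈ S if and only if the trajectory s0(S) a0 s1(S) ... a_{n−1} s_n(S) encoded by S (where occ(a_i,i) ∈ S and s_i(S) = {ℓ | holds(ℓ,i) ∈ S}) satisfies φ. -/

import Mathlib

/- # Action language B -/

/-- A fluent literal: a fluent or its negation. -/
inductive Lit (F : Type) where
  | pos : F → Lit F
  | neg : F → Lit F

namespace Lit
/-- The complement of a fluent literal. -/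
def compl {F : Type} : Lit F → Lit F
  | .pos f => .neg f
  | .neg f => .pos f
end Lit

/-- A set of fluent literals is consistent if it contains no fluent together with
its negation. -/
def ConsistentLits {F : Type} (s : Set (Lit F)) : Prop :=
  ∀ f : F, ¬ (Lit.pos f ∈ s ∧ Lit.neg f ∈ s)

/-- A set of fluent literals is complete if it contains each fluent or its negation. -/
def CompleteLits {F : Type} (s : Set (Lit F)) : Prop :=
  ∀ f : F, Lit.pos f ∈ s ∨ Lit.neg f ∈ s

/-- A static causal law `caused(prem, concl)`. -/
structure StaticLaw (F : Type) where
  prem : Set (Lit F)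
  concl : Lit F

/-- A dynamic causal law `causes(act, concl, prem)`. -/
structure DynamicLaw (F A : Type) where
  act : A
  concl : Lit F
  prem : Set (Lit F)

/-- An executability condition `executable(act, prem)`. -/
structure ExecLaw (F A : Type) where
  act : A
  prem : Set (Lit F)

/-- A domain in the action language B. -/
structure BDomain (F A : Type) where
  statics : Set (StaticLaw F)
  dynamics : Set (DynamicLaw F A)
  execs : Set (ExecLaw F A)

/-- `v` is closed under the set `K` of static causal laws. -/
def ClosedUnder {F : Type} (K : Set (StaticLaw F)) (v : Set (Lit F)) : Prop :=
  ∀ r ∈ K, r.prem ⊆ v → r.concl ∈ v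

/-- `IsCl K u v`: `v` is the least consistent set of literals containing `u`
and closed under `K`. -/
def IsCl {F : Type} (K : Set (StaticLaw F)) (u v : Set (Lit F)) : Prop :=
  u ⊆ v ∧ ConsistentLits v ∧ ClosedUnder K v ∧
    ∀ w, u ⊆ w → ConsistentLits w → ClosedUnder K w → v ⊆ w

/-- A state: a maximal (complete) consistent set of fluent literals closed under
the static causal laws. -/
def IsState {F A : Type} (D : BDomain F A) (s : Set (Lit F)) : Prop :=
  CompleteLits s ∧ ConsistentLits s ∧ ClosedUnder D.statics s

/-- Action `a` is executable in `s`. -/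
def Executable {F A : Type} (D : BDomain F A) (a : A) (s : Set (Lit F)) : Prop :=
  ∃ e ∈ D.execs, e.act = a ∧ e.prem ⊆ s

/-- The direct effects `e(a,s)` of action `a` in `s`. -/
def directEffects {F A : Type} (D : BDomain F A) (a : A) (s : Set (Lit F)) : Set (Lit F) :=
  { l | ∃ d ∈ D.dynamics, d.act = a ∧ d.concl = l ∧ d.prem ⊆ s }

/-- The transition function `Φ` of a domain. -/
def Phi {F A : Type} (D : BDomain F A) (a : A) (s : Set (Lit F)) : Set (Set (Lit F)) :=
  { s' | Executable D a s ∧ IsState D s' ∧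
      IsCl D.statics (directEffects D a s ∪ (s ∩ s')) s' }

/-- A planning problem `⟨D, Γ, Δ⟩`; `init` is the set of literals `f` with
`initially(f) ∈ Γ`, and `goal` is `Δ`. -/
structure PlanningProblem (F A : Type) where
  dom : BDomain F A
  init : Set (Lit F)
  goal : Set (Lit F)

/-- The action theory `(D,Γ)` is consistent: `Φ(a,s) ≠ ∅` whenever `a` is executable
in state `s`, and the initial state is a state. -/
def ConsistentTheory {F A : Type} (P : PlanningProblem F A) : Prop :=
  (∀ (a : A) (s : Set (Lit F)), IsState P.dom s → Executable P.dom a s →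
      (Phi P.dom a s).Nonempty) ∧
  IsState P.dom P.init

/-- `s0 a0 s1 ... a_{n-1} s_n` is a trajectory. -/
def IsTrajectory {F A : Type} (D : BDomain F A) (n : ℕ)
    (ss : ℕ → Set (Lit F)) (acts : ℕ → A) : Prop :=
  IsState D (ss 0) ∧ ∀ i < n, ss (i + 1) ∈ Phi D (acts i) (ss i)

/- # Answer set programming -/

/-- A normal rule (`head = none` gives a constraint). -/
structure NRule (At : Type) where
  head : Option At
  pos : Set At
  neg : Set At

/-- A cardinality-1 choice rule `1{choices}1 ← pos, not neg`. -/
structure CRule (At : Type) where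
  choices : Set At
  pos : Set At
  neg : Set At

/-- A program: normal rules (and constraints) plus choice rules. -/
structure Program (At : Type) where
  normals : Set (NRule At)
  choiceRules : Set (CRule At)

/-- `X` is closed under the Gelfond–Lifschitz reduct of `P` w.r.t. `M`. The reduct
contains `h ← pos` for every normal rule with head `h` whose negative body is
disjoint from `M`, and `a ← pos` for every choice rule with negative body disjoint
from `M` and every chosen atom `a ∈ M`. -/
def ReductClosed {At : Type} (P : Program At) (M X : Set At) : Prop :=
  (∀ r ∈ P.normals, r.neg ∩ M = ∅ → r.pos ⊆ X → ∀ h, r.head = some h → h ∈ X) ∧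
  (∀ c ∈ P.choiceRules, c.neg ∩ M = ∅ → c.pos ⊆ X → ∀ a ∈ c.choices, a ∈ M → a ∈ X)

/-- `M` satisfies all constraints of `P`. -/
def SatConstraints {At : Type} (P : Program At) (M : Set At) : Prop :=
  ∀ r ∈ P.normals, r.head = none → ¬ (r.pos ⊆ M ∧ r.neg ∩ M = ∅)

/-- `M` satisfies the choice rules of `P`: when the body holds, exactly one chosen
atom is in `M`. -/
def SatChoices {At : Type} (P : Program At) (M : Set At) : Prop :=
  ∀ c ∈ P.choiceRules, c.pos ⊆ M → c.neg ∩ M = ∅ → ∃! a, a ∈ c.choices ∧ a ∈ M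

/-- `M` is an answer set (stable model) of `P`: it satisfies constraints and choice
rules and is the least model of the reduct of `P` w.r.t. `M`. -/
def AnswerSet {At : Type} (P : Program At) (M : Set At) : Prop :=
  SatConstraints P M ∧ SatChoices P M ∧ ReductClosed P M M ∧
    ∀ X, ReductClosed P M X → M ⊆ X


/- # Trajectories and basic desire formulas -/

/-- A (candidate) trajectory `s0 a0 s1 ... a_{len-1} s_len`. -/
structure PTraj (F A : Type) where
  len : ℕ
  states : ℕ → Set (Lit F)
  acts : ℕ → A

/-- The suffix `α[i] = s_i a_i ... a_{len-1} s_len`. -/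
def PTraj.suffix {F A : Type} (α : PTraj F A) (i : ℕ) : PTraj F A :=
  ⟨α.len - i, fun j => α.states (i + j), fun j => α.acts (i + j)⟩

/-- Fluent formulas: propositional formulas over fluent literals. -/
inductive FFormula (F : Type) where
  | lit : Lit F → FFormula F
  | conj : FFormula F → FFormula F → FFormula F
  | disj : FFormula F → FFormula F → FFormula F
  | fneg : FFormula F → FFormula F

/-- Satisfaction of a fluent formula in a set of fluent literals. -/
def FSat {F : Type} (s : Set (Lit F)) : FFormula F → Prop
  | .lit l => l ∈ s
  | .conj a b => FSat s a ∧ FSat s b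
  | .disj a b => FSat s a ∨ FSat s b
  | .fneg a => ¬ FSat s a

/-- Basic desire formulas. -/
inductive BDF (F A : Type) where
  | flit : Lit F → BDF F A
  | occA : A → BDF F A
  | goal : FFormula F → BDF F A
  | conj : BDF F A → BDF F A → BDF F A
  | disj : BDF F A → BDF F A → BDF F A
  | bneg : BDF F A → BDF F A
  | next : BDF F A → BDF F A
  | untl : BDF F A → BDF F A → BDF F A
  | always : BDF F A → BDF F A
  | eventually : BDF F A → BDF F A

/-- Satisfaction `α ⊨ ψ` of a basic desire formula by a trajectory. -/
def Sat {F A : Type} : BDF F A → PTraj F A → Prop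
  | .flit l, α => l ∈ α.states 0
  | .occA a, α => 0 < α.len ∧ α.acts 0 = a
  | .goal φ, α => FSat (α.states α.len) φ
  | .conj ψ1 ψ2, α => Sat ψ1 α ∧ Sat ψ2 α
  | .disj ψ1 ψ2, α => Sat ψ1 α ∨ Sat ψ2 α
  | .bneg ψ, α => ¬ Sat ψ α
  | .next ψ, α => 0 < α.len ∧ Sat ψ (α.suffix 1)
  | .untl ψ1 ψ2, α => ∃ i ≤ α.len, (∀ j < i, Sat ψ1 (α.suffix j)) ∧ Sat ψ2 (α.suffix i)
  | .always ψ, α => ∀ i < α.len, Sat ψ (α.suffix i)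
  | .eventually ψ, α => ∃ i ≤ α.len, Sat ψ (α.suffix i)

/-- The subformulas of a fluent formula. -/
def FFormula.subf {F : Type} : FFormula F → List (FFormula F)
  | .lit l => [.lit l]
  | .conj a b => .conj a b :: (a.subf ++ b.subf)
  | .disj a b => .disj a b :: (a.subf ++ b.subf)
  | .fneg a => .fneg a :: a.subf

/-- The subformulas of a basic desire formula. -/
def BDF.subf {F A : Type} : BDF F A → List (BDF F A)
  | .flit l => [.flit l]
  | .occA a => [.occA a]
  | .goal φ => [.goal φ]
  | .conj a b => .conj a b :: (a.subf ++ b.subf)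
  | .disj a b => .disj a b :: (a.subf ++ b.subf)
  | .bneg a => .bneg a :: a.subf
  | .next a => .next a :: a.subf
  | .untl a b => .untl a b :: (a.subf ++ b.subf)
  | .always a => .always a :: a.subf
  | .eventually a => .eventually a :: a.subf

/-- The fluent formulas occurring in goal preferences of a basic desire formula. -/
def BDF.fsubf {F A : Type} : BDF F A → List (FFormula F)
  | .flit _ => []
  | .occA _ => []
  | .goal φ => φ.subf
  | .conj a b => a.fsubf ++ b.fsubf
  | .disj a b => a.fsubf ++ b.fsubf
  | .bneg a => a.fsubf
  | .next a => a.fsubf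
  | .untl a b => a.fsubf ++ b.fsubf
  | .always a => a.fsubf
  | .eventually a => a.fsubf

/- # The encoding Π(P,n) ∪ Π(φ) ∪ Π_pref -/

/-- Atoms of the program `Π(P,n) ∪ Π(φ) ∪ Π_pref`: the planning atoms together with
the atoms `holds(sat(ψ),T)` for basic desire formulas `ψ` and `holds(sat(φ'),T)` for
fluent formulas `φ'`. -/
inductive PrefAtom (F A : Type) where
  | holds : Lit F → ℕ → PrefAtom F A
  | occ : A → ℕ → PrefAtom F A
  | possible : A → ℕ → PrefAtom F A
  | goal : PrefAtom F A
  | sat : BDF F A → ℕ → PrefAtom F A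
  | satF : FFormula F → ℕ → PrefAtom F A

/-- `holds(φ,t)`: the set of atoms `holds(l,t)` for `l ∈ φ`. -/
def holdsSet {F A : Type} (φ : Set (Lit F)) (t : ℕ) : Set (PrefAtom F A) :=
  { x | ∃ l ∈ φ, x = PrefAtom.holds l t }

/-- The rules of `Π_pref` (restricted to the subformulas of `φ`, whose syntax tree is
provided by the facts `Π(φ)`), defining `holds(sat(ψ),T)` so as to mirror the
satisfaction relation of basic desire formulas. -/
def prefRules {F A : Type} (φ : BDF F A) (n : ℕ) : Set (NRule (PrefAtom F A)) :=
  -- rules for fluent subformulas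
  { r | ∃ ψ ∈ φ.fsubf, ∃ t ≤ n, ∃ l : Lit F, ψ = FFormula.lit l ∧
      r = ⟨some (PrefAtom.satF ψ t), {PrefAtom.holds l t}, ∅⟩ } ∪
  { r | ∃ ψ ∈ φ.fsubf, ∃ t ≤ n, ∃ a b : FFormula F, ψ = FFormula.conj a b ∧
      r = ⟨some (PrefAtom.satF ψ t), {PrefAtom.satF a t, PrefAtom.satF b t}, ∅⟩ } ∪
  { r | ∃ ψ ∈ φ.fsubf, ∃ t ≤ n, ∃ a b : FFormula F, ψ = FFormula.disj a b ∧
      (r = ⟨some (PrefAtom.satF ψ t), {PrefAtom.satF a t}, ∅⟩ ∨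
       r = ⟨some (PrefAtom.satF ψ t), {PrefAtom.satF b t}, ∅⟩) } ∪
  { r | ∃ ψ ∈ φ.fsubf, ∃ t ≤ n, ∃ a : FFormula F, ψ = FFormula.fneg a ∧
      r = ⟨some (PrefAtom.satF ψ t), ∅, {PrefAtom.satF a t}⟩ } ∪
  -- holds(sat(ℓ),T) ← holds(ℓ,T)
  { r | ∃ ψ ∈ φ.subf, ∃ t ≤ n, ∃ l : Lit F, ψ = BDF.flit l ∧
      r = ⟨some (PrefAtom.sat ψ t), {PrefAtom.holds l t}, ∅⟩ } ∪
  -- holds(sat(occ(a)),T) ← occ(a,T)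
  { r | ∃ ψ ∈ φ.subf, ∃ t ≤ n, ∃ a : A, ψ = BDF.occA a ∧
      r = ⟨some (PrefAtom.sat ψ t), {PrefAtom.occ a t}, ∅⟩ } ∪
  -- holds(sat(goal(φ')),T) ← holds(sat(φ'),n)
  { r | ∃ ψ ∈ φ.subf, ∃ t ≤ n, ∃ g : FFormula F, ψ = BDF.goal g ∧
      r = ⟨some (PrefAtom.sat ψ t), {PrefAtom.satF g n}, ∅⟩ } ∪
  -- boolean connectives
  { r | ∃ ψ ∈ φ.subf, ∃ t ≤ n, ∃ a b : BDF F A, ψ = BDF.conj a b ∧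
      r = ⟨some (PrefAtom.sat ψ t), {PrefAtom.sat a t, PrefAtom.sat b t}, ∅⟩ } ∪
  { r | ∃ ψ ∈ φ.subf, ∃ t ≤ n, ∃ a b : BDF F A, ψ = BDF.disj a b ∧
      (r = ⟨some (PrefAtom.sat ψ t), {PrefAtom.sat a t}, ∅⟩ ∨
       r = ⟨some (PrefAtom.sat ψ t), {PrefAtom.sat b t}, ∅⟩) } ∪
  { r | ∃ ψ ∈ φ.subf, ∃ t ≤ n, ∃ a : BDF F A, ψ = BDF.bneg a ∧
      r = ⟨some (PrefAtom.sat ψ t), ∅, {PrefAtom.sat a t}⟩ } ∪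
  -- holds(sat(next(ψ)),T) ← holds(sat(ψ),T+1)
  { r | ∃ ψ ∈ φ.subf, ∃ t < n, ∃ a : BDF F A, ψ = BDF.next a ∧
      r = ⟨some (PrefAtom.sat ψ t), {PrefAtom.sat a (t + 1)}, ∅⟩ } ∪
  -- unfolding of until over steps t..n
  { r | ∃ ψ ∈ φ.subf, ∃ t ≤ n, ∃ a b : BDF F A, ψ = BDF.untl a b ∧
      ∃ i, t ≤ i ∧ i ≤ n ∧
      r = ⟨some (PrefAtom.sat ψ t),
           insert (PrefAtom.sat b i)
             { x | ∃ j, t ≤ j ∧ j < i ∧ x = PrefAtom.sat a j }, ∅⟩ } ∪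
  -- unfolding of always over steps t..n-1
  { r | ∃ ψ ∈ φ.subf, ∃ t ≤ n, ∃ a : BDF F A, ψ = BDF.always a ∧
      r = ⟨some (PrefAtom.sat ψ t),
           { x | ∃ j, t ≤ j ∧ j < n ∧ x = PrefAtom.sat a j }, ∅⟩ } ∪
  -- unfolding of eventually over steps t..n
  { r | ∃ ψ ∈ φ.subf, ∃ t ≤ n, ∃ a : BDF F A, ψ = BDF.eventually a ∧
      ∃ i, t ≤ i ∧ i ≤ n ∧
      r = ⟨some (PrefAtom.sat ψ t), {PrefAtom.sat a i}, ∅⟩ }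

/-- The program `Π(P,n) ∪ Π(φ) ∪ Π_pref`: the standard planning encoding with
horizon `n` together with the rules defining `holds(sat(ψ),T)` for the
subformulas `ψ` of `φ`. -/
def PiPrefProgram {F A : Type} (P : PlanningProblem F A) (n : ℕ) (φ : BDF F A) :
    Program (PrefAtom F A) where
  normals :=
    { r | ∃ l ∈ P.init, r = ⟨some (PrefAtom.holds l 0), ∅, ∅⟩ } ∪
    { r | ∃ e ∈ P.dom.execs, ∃ t ≤ n,
        r = ⟨some (PrefAtom.possible e.act t), holdsSet e.prem t, ∅⟩ } ∪
    { r | ∃ d ∈ P.dom.dynamics, ∃ t < n,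
        r = ⟨some (PrefAtom.holds d.concl (t + 1)),
             insert (PrefAtom.occ d.act t) (holdsSet d.prem t), ∅⟩ } ∪
    { r | ∃ sl ∈ P.dom.statics, ∃ t ≤ n,
        r = ⟨some (PrefAtom.holds sl.concl t), holdsSet sl.prem t, ∅⟩ } ∪
    { r | ∃ (a : A), ∃ t < n,
        r = ⟨none, {PrefAtom.occ a t}, {PrefAtom.possible a t}⟩ } ∪
    { r | ∃ (l : Lit F), ∃ t < n,
        r = ⟨some (PrefAtom.holds l (t + 1)), {PrefAtom.holds l t},
             {PrefAtom.holds l.compl (t + 1)}⟩ } ∪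
    { r | ∃ (f : F), ∃ t ≤ n,
        r = ⟨none, {PrefAtom.holds (Lit.pos f) t, PrefAtom.holds (Lit.neg f) t}, ∅⟩ } ∪
    { ⟨some PrefAtom.goal, holdsSet P.goal n, ∅⟩,
      ⟨none, ∅, {PrefAtom.goal}⟩ } ∪
    prefRules φ n
  choiceRules :=
    { c | ∃ t < n, c = ⟨{ x | ∃ a : A, x = PrefAtom.occ a t }, ∅, ∅⟩ }

/- # Auxiliary machinery for the proof -/

section AuxProof

variable {F A : Type}

lemma bdf_mem_subf_self (ψ : BDF F A) : ψ ∈ ψ.subf := by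
  cases ψ <;> simp [BDF.subf]

lemma ff_mem_subf_self (g : FFormula F) : g ∈ g.subf := by
  cases g <;> simp [FFormula.subf]

lemma ff_subf_trans : ∀ (g h : FFormula F), h ∈ g.subf → ∀ x ∈ h.subf, x ∈ g.subf := by
  intro g
  induction g with
  | lit l =>
      intro h hh x hx
      simp only [FFormula.subf, List.mem_singleton] at hh
      subst hh; exact hx
  | conj a b iha ihb =>
      intro h hh x hx
      simp only [FFormula.subf, List.mem_cons, List.mem_append] at hh ⊢
      rcases hh with rfl | hh | hh
      · simpa only [FFormula.subf, List.mem_cons, List.mem_append] using hx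
      · exact Or.inr (Or.inl (iha h hh x hx))
      · exact Or.inr (Or.inr (ihb h hh x hx))
  | disj a b iha ihb =>
      intro h hh x hx
      simp only [FFormula.subf, List.mem_cons, List.mem_append] at hh ⊢
      rcases hh with rfl | hh | hh
      · simpa only [FFormula.subf, List.mem_cons, List.mem_append] using hx
      · exact Or.inr (Or.inl (iha h hh x hx))
      · exact Or.inr (Or.inr (ihb h hh x hx))
  | fneg a iha =>
      intro h hh x hx
      simp only [FFormula.subf, List.mem_cons] at hh ⊢
      rcases hh with rfl | hh
      · simpa only [FFormula.subf, List.mem_cons] using hx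
      · exact Or.inr (iha h hh x hx)

lemma bdf_subf_trans : ∀ (φ ψ : BDF F A), ψ ∈ φ.subf → ∀ x ∈ ψ.subf, x ∈ φ.subf := by
  intro φ
  induction φ with
  | flit l =>
      intro ψ hψ x hx
      simp only [BDF.subf, List.mem_singleton] at hψ; subst hψ; exact hx
  | occA a =>
      intro ψ hψ x hx
      simp only [BDF.subf, List.mem_singleton] at hψ; subst hψ; exact hx
  | goal g =>
      intro ψ hψ x hx
      simp only [BDF.subf, List.mem_singleton] at hψ; subst hψ; exact hx
  | conj a b iha ihb =>
      intro ψ hψ x hx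
      simp only [BDF.subf, List.mem_cons, List.mem_append] at hψ ⊢
      rcases hψ with rfl | hψ | hψ
      · simpa only [BDF.subf, List.mem_cons, List.mem_append] using hx
      · exact Or.inr (Or.inl (iha ψ hψ x hx))
      · exact Or.inr (Or.inr (ihb ψ hψ x hx))
  | disj a b iha ihb =>
      intro ψ hψ x hx
      simp only [BDF.subf, List.mem_cons, List.mem_append] at hψ ⊢
      rcases hψ with rfl | hψ | hψ
      · simpa only [BDF.subf, List.mem_cons, List.mem_append] using hx
      · exact Or.inr (Or.inl (iha ψ hψ x hx))
      · exact Or.inr (Or.inr (ihb ψ hψ x hx))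
  | bneg a iha =>
      intro ψ hψ x hx
      simp only [BDF.subf, List.mem_cons] at hψ ⊢
      rcases hψ with rfl | hψ
      · simpa only [BDF.subf, List.mem_cons] using hx
      · exact Or.inr (iha ψ hψ x hx)
  | next a iha =>
      intro ψ hψ x hx
      simp only [BDF.subf, List.mem_cons] at hψ ⊢
      rcases hψ with rfl | hψ
      · simpa only [BDF.subf, List.mem_cons] using hx
      · exact Or.inr (iha ψ hψ x hx)
  | untl a b iha ihb =>
      intro ψ hψ x hx
      simp only [BDF.subf, List.mem_cons, List.mem_append] at hψ ⊢
      rcases hψ with rfl | hψ | hψ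
      · simpa only [BDF.subf, List.mem_cons, List.mem_append] using hx
      · exact Or.inr (Or.inl (iha ψ hψ x hx))
      · exact Or.inr (Or.inr (ihb ψ hψ x hx))
  | always a iha =>
      intro ψ hψ x hx
      simp only [BDF.subf, List.mem_cons] at hψ ⊢
      rcases hψ with rfl | hψ
      · simpa only [BDF.subf, List.mem_cons] using hx
      · exact Or.inr (iha ψ hψ x hx)
  | eventually a iha =>
      intro ψ hψ x hx
      simp only [BDF.subf, List.mem_cons] at hψ ⊢
      rcases hψ with rfl | hψ
      · simpa only [BDF.subf, List.mem_cons] using hx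
      · exact Or.inr (iha ψ hψ x hx)

/-- `fsubf` is monotone along `subf`. -/
lemma bdf_fsubf_mono : ∀ (φ ψ : BDF F A), ψ ∈ φ.subf → ∀ x ∈ ψ.fsubf, x ∈ φ.fsubf := by
  intro φ
  induction φ with
  | flit l =>
      intro ψ hψ x hx
      simp only [BDF.subf, List.mem_singleton] at hψ; subst hψ; exact hx
  | occA a =>
      intro ψ hψ x hx
      simp only [BDF.subf, List.mem_singleton] at hψ; subst hψ; exact hx
  | goal g =>
      intro ψ hψ x hx
      simp only [BDF.subf, List.mem_singleton] at hψ; subst hψ; exact hx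
  | conj a b iha ihb =>
      intro ψ hψ x hx
      simp only [BDF.subf, List.mem_cons, List.mem_append] at hψ
      simp only [BDF.fsubf, List.mem_append]
      rcases hψ with rfl | hψ | hψ
      · simpa only [BDF.fsubf, List.mem_append] using hx
      · exact Or.inl (iha ψ hψ x hx)
      · exact Or.inr (ihb ψ hψ x hx)
  | disj a b iha ihb =>
      intro ψ hψ x hx
      simp only [BDF.subf, List.mem_cons, List.mem_append] at hψ
      simp only [BDF.fsubf, List.mem_append]
      rcases hψ with rfl | hψ | hψ
      · simpa only [BDF.fsubf, List.mem_append] using hx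
      · exact Or.inl (iha ψ hψ x hx)
      · exact Or.inr (ihb ψ hψ x hx)
  | bneg a iha =>
      intro ψ hψ x hx
      simp only [BDF.subf, List.mem_cons] at hψ
      rcases hψ with rfl | hψ
      · exact hx
      · exact iha ψ hψ x hx
  | next a iha =>
      intro ψ hψ x hx
      simp only [BDF.subf, List.mem_cons] at hψ
      rcases hψ with rfl | hψ
      · exact hx
      · exact iha ψ hψ x hx
  | untl a b iha ihb =>
      intro ψ hψ x hx
      simp only [BDF.subf, List.mem_cons, List.mem_append] at hψ
      simp only [BDF.fsubf, List.mem_append]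
      rcases hψ with rfl | hψ | hψ
      · simpa only [BDF.fsubf, List.mem_append] using hx
      · exact Or.inl (iha ψ hψ x hx)
      · exact Or.inr (ihb ψ hψ x hx)
  | always a iha =>
      intro ψ hψ x hx
      simp only [BDF.subf, List.mem_cons] at hψ
      rcases hψ with rfl | hψ
      · exact hx
      · exact iha ψ hψ x hx
  | eventually a iha =>
      intro ψ hψ x hx
      simp only [BDF.subf, List.mem_cons] at hψ
      rcases hψ with rfl | hψ
      · exact hx
      · exact iha ψ hψ x hx

/-- `fsubf` is closed under taking fluent subformulas. -/
lemma bdf_fsubf_closed : ∀ (φ : BDF F A) (g : FFormula F), g ∈ φ.fsubf →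
    ∀ x ∈ g.subf, x ∈ φ.fsubf := by
  intro φ
  induction φ with
  | flit l => intro g hg; simp [BDF.fsubf] at hg
  | occA a => intro g hg; simp [BDF.fsubf] at hg
  | goal h => intro g hg x hx; exact ff_subf_trans h g hg x hx
  | conj a b iha ihb =>
      intro g hg x hx
      simp only [BDF.fsubf, List.mem_append] at hg ⊢
      rcases hg with hg | hg
      · exact Or.inl (iha g hg x hx)
      · exact Or.inr (ihb g hg x hx)
  | disj a b iha ihb =>
      intro g hg x hx
      simp only [BDF.fsubf, List.mem_append] at hg ⊢
      rcases hg with hg | hg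
      · exact Or.inl (iha g hg x hx)
      · exact Or.inr (ihb g hg x hx)
  | bneg a iha => exact iha
  | next a iha => exact iha
  | untl a b iha ihb =>
      intro g hg x hx
      simp only [BDF.fsubf, List.mem_append] at hg ⊢
      rcases hg with hg | hg
      · exact Or.inl (iha g hg x hx)
      · exact Or.inr (ihb g hg x hx)
  | always a iha => exact iha
  | eventually a iha => exact iha

lemma ptraj_suffix_suffix (α : PTraj F A) (i j : ℕ) :
    (α.suffix i).suffix j = α.suffix (i + j) := by
  simp only [PTraj.suffix]
  congr 1
  · omega
  · funext k; exact congrArg α.states (by omega)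
  · funext k; exact congrArg α.acts (by omega)

lemma ptraj_suffix_zero (α : PTraj F A) : α.suffix 0 = α := by
  cases α with
  | mk len st ac => simp [PTraj.suffix]

end AuxProof
section AuxProof2

variable {F A : Type}

/-- The semantic "correctness" predicate used in the minimality argument. -/
def GoodAt (n : ℕ) (acts : ℕ → A) (S : Set (PrefAtom F A))
    (Ψ : Set (BDF F A)) (Θ : Set (FFormula F)) : PrefAtom F A → Prop
  | .occ a t => t < n ∧ a = acts t
  | .sat ψ t => ψ ∈ Ψ →
      Sat ψ (PTraj.suffix ⟨n, fun i => {l | PrefAtom.holds l i ∈ S}, acts⟩ t)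
  | .satF g t => g ∈ Θ → FSat {l | PrefAtom.holds l t ∈ S} g
  | _ => True

lemma singleton_not_mem_of_inter {x : PrefAtom F A} {S : Set (PrefAtom F A)}
    (h : ({x} : Set (PrefAtom F A)) ∩ S = ∅) : x ∉ S := by
  intro hx
  have : x ∈ ({x} : Set (PrefAtom F A)) ∩ S := ⟨rfl, hx⟩
  rw [h] at this
  exact this

lemma memProg_pref (P : PlanningProblem F A) (n : ℕ) (φ : BDF F A)
    {r : NRule (PrefAtom F A)} (h : r ∈ prefRules φ n) :
    r ∈ (PiPrefProgram P n φ).normals :=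
  Set.mem_union_right _ h

lemma good_closed (P : PlanningProblem F A) (n : ℕ) (φ : BDF F A)
    (S : Set (PrefAtom F A)) (acts : ℕ → A)
    (Ψ : Set (BDF F A)) (Θ : Set (FFormula F))
    (hS : AnswerSet (PiPrefProgram P n φ) S)
    (hocc : ∀ i < n, PrefAtom.occ (acts i) i ∈ S)
    (hΨdown : ∀ ψ ∈ Ψ, ∀ χ ∈ BDF.subf ψ, χ ∈ Ψ)
    (hΘdown : ∀ g ∈ Θ, ∀ h ∈ FFormula.subf g, h ∈ Θ)
    (hΨΘ : ∀ g : FFormula F, BDF.goal g ∈ Ψ → g ∈ Θ)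
    (hback : ∀ ψ ∈ Ψ, ∀ t ≤ n,
      Sat ψ (PTraj.suffix ⟨n, fun i => {l | PrefAtom.holds l i ∈ S}, acts⟩ t) →
        PrefAtom.sat ψ t ∈ S)
    (hfback : ∀ g ∈ Θ, ∀ t ≤ n,
      FSat {l | PrefAtom.holds l t ∈ S} g → PrefAtom.satF g t ∈ S) :
    ReductClosed (PiPrefProgram P n φ) S
      {x | x ∈ S ∧ GoodAt n acts S Ψ Θ x} := by
  constructor
  · intro r hr hneg hpos h hh
    have hhS : h ∈ S := hS.2.2.1.1 r hr hneg (fun x hx => (hpos hx).1) h hh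
    refine ⟨hhS, ?_⟩
    simp only [PiPrefProgram, prefRules, Set.mem_union, Set.mem_setOf_eq,
      Set.mem_insert_iff, Set.mem_singleton_iff] at hr
    rcases hr with ((((((((hr | hr) | hr) | hr) | hr) | hr) | hr) | (hr | hr)) |
      (((((((((((((hr | hr) | hr) | hr) | hr) | hr) | hr) | hr) | hr) | hr) | hr) | hr) | hr) | hr))
    -- c1 : initial facts
    · obtain ⟨l, -, rfl⟩ := hr
      obtain rfl := Option.some.inj hh
      trivial
    -- c2 : executability
    · obtain ⟨e, -, t, -, rfl⟩ := hr
      obtain rfl := Option.some.inj hh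
      trivial
    -- c3 : dynamic laws
    · obtain ⟨d, -, t, -, rfl⟩ := hr
      obtain rfl := Option.some.inj hh
      trivial
    -- c4 : static laws
    · obtain ⟨sl, -, t, -, rfl⟩ := hr
      obtain rfl := Option.some.inj hh
      trivial
    -- c5 : executability constraint
    · obtain ⟨a, t, -, rfl⟩ := hr
      simp at hh
    -- c6 : inertia
    · obtain ⟨l, t, -, rfl⟩ := hr
      obtain rfl := Option.some.inj hh
      trivial
    -- c7 : consistency constraint
    · obtain ⟨f, t, -, rfl⟩ := hr
      simp at hh
    -- c8a : goal rule
    · subst hr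
      obtain rfl := Option.some.inj hh
      trivial
    -- c8b : goal constraint
    · subst hr
      simp at hh
    -- p1 : satF lit
    · obtain ⟨g, -, t, -, l, rfl, rfl⟩ := hr
      obtain rfl := Option.some.inj hh
      intro _
      exact (hpos rfl).1
    -- p2 : satF conj
    · obtain ⟨g, -, t, -, a, b, rfl, rfl⟩ := hr
      obtain rfl := Option.some.inj hh
      intro hΘg
      have haΘ : a ∈ Θ := hΘdown _ hΘg a
        (List.mem_cons_of_mem _ (List.mem_append_left _ (ff_mem_subf_self a)))
      have hbΘ : b ∈ Θ := hΘdown _ hΘg b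
        (List.mem_cons_of_mem _ (List.mem_append_right _ (ff_mem_subf_self b)))
      exact ⟨(hpos (Or.inl rfl)).2 haΘ, (hpos (Or.inr rfl)).2 hbΘ⟩
    -- p3 : satF disj
    · obtain ⟨g, -, t, -, a, b, rfl, hr⟩ := hr
      rcases hr with rfl | rfl
      · obtain rfl := Option.some.inj hh
        intro hΘg
        have haΘ : a ∈ Θ := hΘdown _ hΘg a
          (List.mem_cons_of_mem _ (List.mem_append_left _ (ff_mem_subf_self a)))
        exact Or.inl ((hpos rfl).2 haΘ)
      · obtain rfl := Option.some.inj hh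
        intro hΘg
        have hbΘ : b ∈ Θ := hΘdown _ hΘg b
          (List.mem_cons_of_mem _ (List.mem_append_right _ (ff_mem_subf_self b)))
        exact Or.inr ((hpos rfl).2 hbΘ)
    -- p4 : satF fneg
    · obtain ⟨g, -, t, ht, a, rfl, rfl⟩ := hr
      obtain rfl := Option.some.inj hh
      intro hΘg hFSa
      have haΘ : a ∈ Θ := hΘdown _ hΘg a
        (List.mem_cons_of_mem _ (ff_mem_subf_self a))
      exact singleton_not_mem_of_inter hneg (hfback a haΘ t ht hFSa)
    -- p5 : sat flit
    · obtain ⟨ψ, -, t, -, l, rfl, rfl⟩ := hr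
      obtain rfl := Option.some.inj hh
      intro _
      show l ∈ {l' | PrefAtom.holds l' (t + 0) ∈ S}
      simpa using (hpos rfl).1
    -- p6 : sat occA
    · obtain ⟨ψ, -, t, -, a, rfl, rfl⟩ := hr
      obtain rfl := Option.some.inj hh
      intro _
      obtain ⟨h1, h2⟩ := (hpos rfl).2
      refine ⟨?_, ?_⟩
      · show 0 < n - t
        omega
      · show acts (t + 0) = a
        simp [h2]
    -- p7 : sat goal
    · obtain ⟨ψ, -, t, ht, g, rfl, rfl⟩ := hr
      obtain rfl := Option.some.inj hh
      intro hΨψ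
      have hFS := (hpos rfl).2 (hΨΘ g hΨψ)
      show FSat {l | PrefAtom.holds l (t + (n - t)) ∈ S} g
      simp only [show t + (n - t) = n from by omega]
      exact hFS
    -- p8 : sat conj
    · obtain ⟨ψ, -, t, -, a, b, rfl, rfl⟩ := hr
      obtain rfl := Option.some.inj hh
      intro hΨψ
      have haΨ : a ∈ Ψ := hΨdown _ hΨψ a
        (List.mem_cons_of_mem _ (List.mem_append_left _ (bdf_mem_subf_self a)))
      have hbΨ : b ∈ Ψ := hΨdown _ hΨψ b
        (List.mem_cons_of_mem _ (List.mem_append_right _ (bdf_mem_subf_self b)))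
      exact ⟨(hpos (Or.inl rfl)).2 haΨ, (hpos (Or.inr rfl)).2 hbΨ⟩
    -- p9 : sat disj
    · obtain ⟨ψ, -, t, -, a, b, rfl, hr⟩ := hr
      rcases hr with rfl | rfl
      · obtain rfl := Option.some.inj hh
        intro hΨψ
        have haΨ : a ∈ Ψ := hΨdown _ hΨψ a
          (List.mem_cons_of_mem _ (List.mem_append_left _ (bdf_mem_subf_self a)))
        exact Or.inl ((hpos rfl).2 haΨ)
      · obtain rfl := Option.some.inj hh
        intro hΨψ
        have hbΨ : b ∈ Ψ := hΨdown _ hΨψ b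
          (List.mem_cons_of_mem _ (List.mem_append_right _ (bdf_mem_subf_self b)))
        exact Or.inr ((hpos rfl).2 hbΨ)
    -- p10 : sat bneg
    · obtain ⟨ψ, -, t, ht, a, rfl, rfl⟩ := hr
      obtain rfl := Option.some.inj hh
      intro hΨψ hSata
      have haΨ : a ∈ Ψ := hΨdown _ hΨψ a
        (List.mem_cons_of_mem _ (bdf_mem_subf_self a))
      exact singleton_not_mem_of_inter hneg (hback a haΨ t ht hSata)
    -- p11 : sat next
    · obtain ⟨ψ, -, t, htn, a, rfl, rfl⟩ := hr
      obtain rfl := Option.some.inj hh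
      intro hΨψ
      have haΨ : a ∈ Ψ := hΨdown _ hΨψ a
        (List.mem_cons_of_mem _ (bdf_mem_subf_self a))
      refine ⟨?_, ?_⟩
      · show 0 < n - t
        omega
      · rw [ptraj_suffix_suffix]
        exact (hpos rfl).2 haΨ
    -- p12 : sat until
    · obtain ⟨ψ, -, t, ht, a, b, rfl, i, hti, hin, rfl⟩ := hr
      obtain rfl := Option.some.inj hh
      intro hΨψ
      have haΨ : a ∈ Ψ := hΨdown _ hΨψ a
        (List.mem_cons_of_mem _ (List.mem_append_left _ (bdf_mem_subf_self a)))
      have hbΨ : b ∈ Ψ := hΨdown _ hΨψ b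
        (List.mem_cons_of_mem _ (List.mem_append_right _ (bdf_mem_subf_self b)))
      refine ⟨i - t, ?_, ?_, ?_⟩
      · show i - t ≤ n - t
        omega
      · intro j hj
        rw [ptraj_suffix_suffix]
        exact (hpos (Or.inr ⟨t + j, by omega, by omega, rfl⟩)).2 haΨ
      · rw [ptraj_suffix_suffix, show t + (i - t) = i from by omega]
        exact (hpos (Or.inl rfl)).2 hbΨ
    -- p13 : sat always
    · obtain ⟨ψ, -, t, ht, a, rfl, rfl⟩ := hr
      obtain rfl := Option.some.inj hh
      intro hΨψ
      have haΨ : a ∈ Ψ := hΨdown _ hΨψ a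
        (List.mem_cons_of_mem _ (bdf_mem_subf_self a))
      intro j hj
      have hj' : j < n - t := hj
      rw [ptraj_suffix_suffix]
      exact (hpos ⟨t + j, by omega, by omega, rfl⟩).2 haΨ
    -- p14 : sat eventually
    · obtain ⟨ψ, -, t, ht, a, rfl, i, hti, hin, rfl⟩ := hr
      obtain rfl := Option.some.inj hh
      intro hΨψ
      have haΨ : a ∈ Ψ := hΨdown _ hΨψ a
        (List.mem_cons_of_mem _ (bdf_mem_subf_self a))
      refine ⟨i - t, ?_, ?_⟩
      · show i - t ≤ n - t
        omega
      · rw [ptraj_suffix_suffix, show t + (i - t) = i from by omega]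
        exact (hpos rfl).2 haΨ
  · intro c hc hcneg hcpos a ha haS
    have hc0 := hc
    simp only [PiPrefProgram, Set.mem_setOf_eq] at hc
    obtain ⟨t, htn, rfl⟩ := hc
    obtain ⟨b, rfl⟩ := ha
    refine ⟨haS, htn, ?_⟩
    obtain ⟨x, -, hxuniq⟩ := hS.2.1 _ hc0 (Set.empty_subset S) (Set.empty_inter S)
    have h1 := hxuniq (PrefAtom.occ b t) ⟨⟨b, rfl⟩, haS⟩
    have h2 := hxuniq (PrefAtom.occ (acts t) t) ⟨⟨acts t, rfl⟩, hocc t htn⟩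
    have h3 := h1.trans h2.symm
    exact (PrefAtom.occ.inj h3).1

end AuxProof2
section AuxProof3

variable {F A : Type}

lemma memPR1 (φ : BDF F A) (n : ℕ) {l : Lit F} {t : ℕ}
    (h : FFormula.lit l ∈ φ.fsubf) (ht : t ≤ n) :
    (⟨some (PrefAtom.satF (FFormula.lit l) t), {PrefAtom.holds l t}, ∅⟩ :
      NRule (PrefAtom F A)) ∈ prefRules φ n := by
  simp only [prefRules, Set.mem_union]
  iterate 13 left
  exact ⟨_, h, t, ht, l, rfl, rfl⟩


lemma memPR2 (φ : BDF F A) (n : ℕ) {a b : FFormula F} {t : ℕ}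
    (h : FFormula.conj a b ∈ φ.fsubf) (ht : t ≤ n) :
    (⟨some (PrefAtom.satF (FFormula.conj a b) t), {PrefAtom.satF a t, PrefAtom.satF b t}, ∅⟩ :
      NRule (PrefAtom F A)) ∈ prefRules φ n := by
  simp only [prefRules, Set.mem_union]
  iterate 12 left
  right
  exact ⟨_, h, t, ht, a, b, rfl, rfl⟩


lemma memPR3l (φ : BDF F A) (n : ℕ) {a b : FFormula F} {t : ℕ}
    (h : FFormula.disj a b ∈ φ.fsubf) (ht : t ≤ n) :
    (⟨some (PrefAtom.satF (FFormula.disj a b) t), {PrefAtom.satF a t}, ∅⟩ :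
      NRule (PrefAtom F A)) ∈ prefRules φ n := by
  simp only [prefRules, Set.mem_union]
  iterate 11 left
  right
  exact ⟨_, h, t, ht, a, b, rfl, Or.inl rfl⟩


lemma memPR3r (φ : BDF F A) (n : ℕ) {a b : FFormula F} {t : ℕ}
    (h : FFormula.disj a b ∈ φ.fsubf) (ht : t ≤ n) :
    (⟨some (PrefAtom.satF (FFormula.disj a b) t), {PrefAtom.satF b t}, ∅⟩ :
      NRule (PrefAtom F A)) ∈ prefRules φ n := by
  simp only [prefRules, Set.mem_union]
  iterate 11 left
  right
  exact ⟨_, h, t, ht, a, b, rfl, Or.inr rfl⟩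


lemma memPR4 (φ : BDF F A) (n : ℕ) {a : FFormula F} {t : ℕ}
    (h : FFormula.fneg a ∈ φ.fsubf) (ht : t ≤ n) :
    (⟨some (PrefAtom.satF (FFormula.fneg a) t), ∅, {PrefAtom.satF a t}⟩ :
      NRule (PrefAtom F A)) ∈ prefRules φ n := by
  simp only [prefRules, Set.mem_union]
  iterate 10 left
  right
  exact ⟨_, h, t, ht, a, rfl, rfl⟩


lemma memPR5 (φ : BDF F A) (n : ℕ) {l : Lit F} {t : ℕ}
    (h : BDF.flit l ∈ φ.subf) (ht : t ≤ n) :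
    (⟨some (PrefAtom.sat (BDF.flit l) t), {PrefAtom.holds l t}, ∅⟩ :
      NRule (PrefAtom F A)) ∈ prefRules φ n := by
  simp only [prefRules, Set.mem_union]
  iterate 9 left
  right
  exact ⟨_, h, t, ht, l, rfl, rfl⟩


lemma memPR6 (φ : BDF F A) (n : ℕ) {a : A} {t : ℕ}
    (h : BDF.occA a ∈ φ.subf) (ht : t ≤ n) :
    (⟨some (PrefAtom.sat (BDF.occA a) t), {PrefAtom.occ a t}, ∅⟩ :
      NRule (PrefAtom F A)) ∈ prefRules φ n := by
  simp only [prefRules, Set.mem_union]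
  iterate 8 left
  right
  exact ⟨_, h, t, ht, a, rfl, rfl⟩


lemma memPR7 (φ : BDF F A) (n : ℕ) {g : FFormula F} {t : ℕ}
    (h : BDF.goal g ∈ φ.subf) (ht : t ≤ n) :
    (⟨some (PrefAtom.sat (BDF.goal g) t), {PrefAtom.satF g n}, ∅⟩ :
      NRule (PrefAtom F A)) ∈ prefRules φ n := by
  simp only [prefRules, Set.mem_union]
  iterate 7 left
  right
  exact ⟨_, h, t, ht, g, rfl, rfl⟩


lemma memPR8 (φ : BDF F A) (n : ℕ) {a b : BDF F A} {t : ℕ}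
    (h : BDF.conj a b ∈ φ.subf) (ht : t ≤ n) :
    (⟨some (PrefAtom.sat (BDF.conj a b) t), {PrefAtom.sat a t, PrefAtom.sat b t}, ∅⟩ :
      NRule (PrefAtom F A)) ∈ prefRules φ n := by
  simp only [prefRules, Set.mem_union]
  iterate 6 left
  right
  exact ⟨_, h, t, ht, a, b, rfl, rfl⟩


lemma memPR9l (φ : BDF F A) (n : ℕ) {a b : BDF F A} {t : ℕ}
    (h : BDF.disj a b ∈ φ.subf) (ht : t ≤ n) :
    (⟨some (PrefAtom.sat (BDF.disj a b) t), {PrefAtom.sat a t}, ∅⟩ :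
      NRule (PrefAtom F A)) ∈ prefRules φ n := by
  simp only [prefRules, Set.mem_union]
  iterate 5 left
  right
  exact ⟨_, h, t, ht, a, b, rfl, Or.inl rfl⟩


lemma memPR9r (φ : BDF F A) (n : ℕ) {a b : BDF F A} {t : ℕ}
    (h : BDF.disj a b ∈ φ.subf) (ht : t ≤ n) :
    (⟨some (PrefAtom.sat (BDF.disj a b) t), {PrefAtom.sat b t}, ∅⟩ :
      NRule (PrefAtom F A)) ∈ prefRules φ n := by
  simp only [prefRules, Set.mem_union]
  iterate 5 left
  right
  exact ⟨_, h, t, ht, a, b, rfl, Or.inr rfl⟩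


lemma memPR10 (φ : BDF F A) (n : ℕ) {a : BDF F A} {t : ℕ}
    (h : BDF.bneg a ∈ φ.subf) (ht : t ≤ n) :
    (⟨some (PrefAtom.sat (BDF.bneg a) t), ∅, {PrefAtom.sat a t}⟩ :
      NRule (PrefAtom F A)) ∈ prefRules φ n := by
  simp only [prefRules, Set.mem_union]
  iterate 4 left
  right
  exact ⟨_, h, t, ht, a, rfl, rfl⟩


lemma memPR11 (φ : BDF F A) (n : ℕ) {a : BDF F A} {t : ℕ}
    (h : BDF.next a ∈ φ.subf) (ht : t < n) :
    (⟨some (PrefAtom.sat (BDF.next a) t), {PrefAtom.sat a (t + 1)}, ∅⟩ :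
      NRule (PrefAtom F A)) ∈ prefRules φ n := by
  simp only [prefRules, Set.mem_union]
  iterate 3 left
  right
  exact ⟨_, h, t, ht, a, rfl, rfl⟩


lemma memPR12 (φ : BDF F A) (n : ℕ) {a b : BDF F A} {t i : ℕ}
    (h : BDF.untl a b ∈ φ.subf) (ht : t ≤ n) (h1 : t ≤ i) (h2 : i ≤ n) :
    (⟨some (PrefAtom.sat (BDF.untl a b) t),
        insert (PrefAtom.sat b i) { x | ∃ j, t ≤ j ∧ j < i ∧ x = PrefAtom.sat a j }, ∅⟩ :
      NRule (PrefAtom F A)) ∈ prefRules φ n := by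
  simp only [prefRules, Set.mem_union]
  iterate 2 left
  right
  exact ⟨_, h, t, ht, a, b, rfl, i, h1, h2, rfl⟩


lemma memPR13 (φ : BDF F A) (n : ℕ) {a : BDF F A} {t : ℕ}
    (h : BDF.always a ∈ φ.subf) (ht : t ≤ n) :
    (⟨some (PrefAtom.sat (BDF.always a) t),
        { x | ∃ j, t ≤ j ∧ j < n ∧ x = PrefAtom.sat a j }, ∅⟩ :
      NRule (PrefAtom F A)) ∈ prefRules φ n := by
  simp only [prefRules, Set.mem_union]
  iterate 1 left
  right
  exact ⟨_, h, t, ht, a, rfl, rfl⟩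


lemma memPR14 (φ : BDF F A) (n : ℕ) {a : BDF F A} {t i : ℕ}
    (h : BDF.eventually a ∈ φ.subf) (ht : t ≤ n) (h1 : t ≤ i) (h2 : i ≤ n) :
    (⟨some (PrefAtom.sat (BDF.eventually a) t), {PrefAtom.sat a i}, ∅⟩ :
      NRule (PrefAtom F A)) ∈ prefRules φ n := by
  simp only [prefRules, Set.mem_union]
  right
  exact ⟨_, h, t, ht, a, rfl, i, h1, h2, rfl⟩


end AuxProof3
section AuxProof4

variable {F A : Type}

/-- The trajectory encoded by `S`. -/
abbrev STraj (n : ℕ) (S : Set (PrefAtom F A)) (acts : ℕ → A) : PTraj F A :=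
  ⟨n, fun i => {l | PrefAtom.holds l i ∈ S}, acts⟩

lemma derive (P : PlanningProblem F A) (n : ℕ) (φ : BDF F A) {S : Set (PrefAtom F A)}
    (hS : AnswerSet (PiPrefProgram P n φ) S) {r : NRule (PrefAtom F A)}
    (hr : r ∈ prefRules φ n) (hneg : r.neg ∩ S = ∅) (hpos : r.pos ⊆ S)
    {h : PrefAtom F A} (hh : r.head = some h) : h ∈ S :=
  hS.2.2.1.1 r (memProg_pref P n φ hr) hneg hpos h hh

lemma forwardF (P : PlanningProblem F A) (n : ℕ) (φ : BDF F A)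
    (S : Set (PrefAtom F A)) (acts : ℕ → A)
    (hS : AnswerSet (PiPrefProgram P n φ) S)
    (hocc : ∀ i < n, PrefAtom.occ (acts i) i ∈ S)
    (g : FFormula F)
    (hfb : ∀ h ∈ g.subf, ∀ t ≤ n,
      FSat {l | PrefAtom.holds l t ∈ S} h → PrefAtom.satF h t ∈ S) :
    ∀ h ∈ g.subf, ∀ t, PrefAtom.satF h t ∈ S →
      FSat {l | PrefAtom.holds l t ∈ S} h := by
  intro h hh t hmem
  have hX := hS.2.2.2 _
    (good_closed P n φ S acts ∅ {x | x ∈ g.subf} hS hocc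
      (fun ψ hψ => (Set.notMem_empty ψ hψ).elim)
      (fun g' hg' x hx => ff_subf_trans g g' hg' x hx)
      (fun g' hg' => (Set.notMem_empty _ hg').elim)
      (fun ψ hψ => (Set.notMem_empty ψ hψ).elim)
      (fun h' hh' t' ht' => hfb h' hh' t' ht')) hmem
  exact hX.2 hh

lemma forwardB (P : PlanningProblem F A) (n : ℕ) (φ : BDF F A)
    (S : Set (PrefAtom F A)) (acts : ℕ → A)
    (hS : AnswerSet (PiPrefProgram P n φ) S)
    (hocc : ∀ i < n, PrefAtom.occ (acts i) i ∈ S)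
    (ψ : BDF F A) (hψφ : ψ ∈ φ.subf)
    (hb : ∀ χ ∈ ψ.subf, ∀ t ≤ n,
      Sat χ ((STraj n S acts).suffix t) → PrefAtom.sat χ t ∈ S)
    (hfb : ∀ g ∈ φ.fsubf, ∀ t ≤ n,
      FSat {l | PrefAtom.holds l t ∈ S} g → PrefAtom.satF g t ∈ S) :
    ∀ χ ∈ ψ.subf, ∀ t, PrefAtom.sat χ t ∈ S → Sat χ ((STraj n S acts).suffix t) := by
  intro χ hχ t hmem
  have hX := hS.2.2.2 _
    (good_closed P n φ S acts {x | x ∈ ψ.subf} {x | x ∈ φ.fsubf} hS hocc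
      (fun χ' hχ' x hx => bdf_subf_trans ψ χ' hχ' x hx)
      (fun g hg x hx => bdf_fsubf_closed φ g hg x hx)
      (fun g hg => bdf_fsubf_mono φ (BDF.goal g)
        (bdf_subf_trans φ ψ hψφ _ hg) g (ff_mem_subf_self g))
      hb hfb) hmem
  exact hX.2 hχ

lemma claimF (P : PlanningProblem F A) (n : ℕ) (φ : BDF F A)
    (S : Set (PrefAtom F A)) (acts : ℕ → A)
    (hS : AnswerSet (PiPrefProgram P n φ) S)
    (hocc : ∀ i < n, PrefAtom.occ (acts i) i ∈ S) :
    ∀ g : FFormula F, g ∈ φ.fsubf → ∀ h ∈ g.subf, ∀ t ≤ n,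
      (PrefAtom.satF h t ∈ S ↔ FSat {l | PrefAtom.holds l t ∈ S} h) := by
  intro g
  induction g with
  | lit l =>
      intro hφ h hh t ht
      have hbk : ∀ h' ∈ (FFormula.lit l).subf, ∀ t' ≤ n,
          FSat {x | PrefAtom.holds x t' ∈ S} h' → PrefAtom.satF h' t' ∈ S := by
        intro h' hh' t' ht' hFS
        simp only [FFormula.subf, List.mem_singleton] at hh'
        subst hh'
        exact derive P n φ hS (memPR1 φ n hφ ht') (Set.empty_inter S)
          (Set.singleton_subset_iff.mpr hFS) rfl
      exact ⟨fun hmem => forwardF P n φ S acts hS hocc _ hbk h hh t hmem, hbk h hh t ht⟩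
  | conj a b iha ihb =>
      intro hφ h hh t ht
      have haφ : a ∈ φ.fsubf := bdf_fsubf_closed φ _ hφ a
        (List.mem_cons_of_mem _ (List.mem_append_left _ (ff_mem_subf_self a)))
      have hbφ : b ∈ φ.fsubf := bdf_fsubf_closed φ _ hφ b
        (List.mem_cons_of_mem _ (List.mem_append_right _ (ff_mem_subf_self b)))
      have hbk : ∀ h' ∈ (FFormula.conj a b).subf, ∀ t' ≤ n,
          FSat {x | PrefAtom.holds x t' ∈ S} h' → PrefAtom.satF h' t' ∈ S := by
        intro h' hh' t' ht'
        simp only [FFormula.subf, List.mem_cons, List.mem_append] at hh'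
        rcases hh' with rfl | hh' | hh'
        · intro hFS
          have h1 := (iha haφ a (ff_mem_subf_self a) t' ht').mpr hFS.1
          have h2 := (ihb hbφ b (ff_mem_subf_self b) t' ht').mpr hFS.2
          exact derive P n φ hS (memPR2 φ n hφ ht') (Set.empty_inter S)
            (Set.insert_subset_iff.mpr ⟨h1, Set.singleton_subset_iff.mpr h2⟩) rfl
        · exact fun hFS => (iha haφ h' hh' t' ht').mpr hFS
        · exact fun hFS => (ihb hbφ h' hh' t' ht').mpr hFS
      exact ⟨fun hmem => forwardF P n φ S acts hS hocc _ hbk h hh t hmem, hbk h hh t ht⟩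
  | disj a b iha ihb =>
      intro hφ h hh t ht
      have haφ : a ∈ φ.fsubf := bdf_fsubf_closed φ _ hφ a
        (List.mem_cons_of_mem _ (List.mem_append_left _ (ff_mem_subf_self a)))
      have hbφ : b ∈ φ.fsubf := bdf_fsubf_closed φ _ hφ b
        (List.mem_cons_of_mem _ (List.mem_append_right _ (ff_mem_subf_self b)))
      have hbk : ∀ h' ∈ (FFormula.disj a b).subf, ∀ t' ≤ n,
          FSat {x | PrefAtom.holds x t' ∈ S} h' → PrefAtom.satF h' t' ∈ S := by
        intro h' hh' t' ht'
        simp only [FFormula.subf, List.mem_cons, List.mem_append] at hh'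
        rcases hh' with rfl | hh' | hh'
        · intro hFS
          have hFS' : FSat {x | PrefAtom.holds x t' ∈ S} a ∨
              FSat {x | PrefAtom.holds x t' ∈ S} b := hFS
          rcases hFS' with hFS' | hFS'
          · exact derive P n φ hS (memPR3l φ n hφ ht') (Set.empty_inter S)
              (Set.singleton_subset_iff.mpr
                ((iha haφ a (ff_mem_subf_self a) t' ht').mpr hFS')) rfl
          · exact derive P n φ hS (memPR3r φ n hφ ht') (Set.empty_inter S)
              (Set.singleton_subset_iff.mpr
                ((ihb hbφ b (ff_mem_subf_self b) t' ht').mpr hFS')) rfl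
        · exact fun hFS => (iha haφ h' hh' t' ht').mpr hFS
        · exact fun hFS => (ihb hbφ h' hh' t' ht').mpr hFS
      exact ⟨fun hmem => forwardF P n φ S acts hS hocc _ hbk h hh t hmem, hbk h hh t ht⟩
  | fneg a iha =>
      intro hφ h hh t ht
      have haφ : a ∈ φ.fsubf := bdf_fsubf_closed φ _ hφ a
        (List.mem_cons_of_mem _ (ff_mem_subf_self a))
      have hbka : ∀ h' ∈ a.subf, ∀ t' ≤ n,
          FSat {x | PrefAtom.holds x t' ∈ S} h' → PrefAtom.satF h' t' ∈ S :=
        fun h' hh' t' ht' hFS => (iha haφ h' hh' t' ht').mpr hFS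
      have hbk : ∀ h' ∈ (FFormula.fneg a).subf, ∀ t' ≤ n,
          FSat {x | PrefAtom.holds x t' ∈ S} h' → PrefAtom.satF h' t' ∈ S := by
        intro h' hh' t' ht'
        simp only [FFormula.subf, List.mem_cons] at hh'
        rcases hh' with rfl | hh'
        · intro hFS
          have hFS' : ¬ FSat {x | PrefAtom.holds x t' ∈ S} a := hFS
          have hna : PrefAtom.satF a t' ∉ S := fun hmem =>
            hFS' (forwardF P n φ S acts hS hocc a hbka a (ff_mem_subf_self a) t' hmem)
          exact derive P n φ hS (memPR4 φ n hφ ht')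
            (Set.singleton_inter_eq_empty.mpr hna) (Set.empty_subset S) rfl
        · exact fun hFS => (iha haφ h' hh' t' ht').mpr hFS
      exact ⟨fun hmem => forwardF P n φ S acts hS hocc _ hbk h hh t hmem, hbk h hh t ht⟩

end AuxProof4
lemma claimB {F A : Type} (P : PlanningProblem F A) (n : ℕ) (φ : BDF F A)
    (S : Set (PrefAtom F A)) (acts : ℕ → A)
    (hS : AnswerSet (PiPrefProgram P n φ) S)
    (hocc : ∀ i < n, PrefAtom.occ (acts i) i ∈ S) :
    ∀ ψ : BDF F A, ψ ∈ φ.subf → ∀ χ ∈ ψ.subf, ∀ t ≤ n,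
      (PrefAtom.sat χ t ∈ S ↔ Sat χ ((STraj n S acts).suffix t)) := by
  have hfbg : ∀ g ∈ φ.fsubf, ∀ t ≤ n,
      FSat {l | PrefAtom.holds l t ∈ S} g → PrefAtom.satF g t ∈ S :=
    fun g hg t ht hFS =>
      (claimF P n φ S acts hS hocc g hg g (ff_mem_subf_self g) t ht).mpr hFS
  intro ψ
  induction ψ with
  | flit l =>
      intro hφ χ hχ t ht
      have hbk : ∀ χ' ∈ (BDF.flit l : BDF F A).subf, ∀ t' ≤ n,
          Sat χ' ((STraj n S acts).suffix t') → PrefAtom.sat χ' t' ∈ S := by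
        intro χ' hχ' t' ht' hsat
        simp only [BDF.subf, List.mem_singleton] at hχ'
        subst hχ'
        have hl : PrefAtom.holds l (t' + 0) ∈ S := hsat
        rw [Nat.add_zero] at hl
        exact derive P n φ hS (memPR5 φ n hφ ht') (Set.empty_inter S)
          (Set.singleton_subset_iff.mpr hl) rfl
      exact ⟨fun hmem => forwardB P n φ S acts hS hocc _ hφ hbk hfbg χ hχ t hmem,
        hbk χ hχ t ht⟩
  | occA a =>
      intro hφ χ hχ t ht
      have hbk : ∀ χ' ∈ (BDF.occA a : BDF F A).subf, ∀ t' ≤ n,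
          Sat χ' ((STraj n S acts).suffix t') → PrefAtom.sat χ' t' ∈ S := by
        intro χ' hχ' t' ht' hsat
        simp only [BDF.subf, List.mem_singleton] at hχ'
        subst hχ'
        obtain ⟨h1, h2⟩ := hsat
        have h1' : 0 < n - t' := h1
        have h2' : acts (t' + 0) = a := h2
        have hoc : PrefAtom.occ a t' ∈ S := by
          rw [← h2']
          simpa using hocc t' (by omega)
        exact derive P n φ hS (memPR6 φ n hφ ht') (Set.empty_inter S)
          (Set.singleton_subset_iff.mpr hoc) rfl
      exact ⟨fun hmem => forwardB P n φ S acts hS hocc _ hφ hbk hfbg χ hχ t hmem,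
        hbk χ hχ t ht⟩
  | goal g =>
      intro hφ χ hχ t ht
      have hgf : g ∈ φ.fsubf := bdf_fsubf_mono φ (BDF.goal g) hφ g (ff_mem_subf_self g)
      have hbk : ∀ χ' ∈ (BDF.goal g : BDF F A).subf, ∀ t' ≤ n,
          Sat χ' ((STraj n S acts).suffix t') → PrefAtom.sat χ' t' ∈ S := by
        intro χ' hχ' t' ht' hsat
        simp only [BDF.subf, List.mem_singleton] at hχ'
        subst hχ'
        have hFS : FSat {l | PrefAtom.holds l (t' + (n - t')) ∈ S} g := hsat
        simp only [show t' + (n - t') = n from by omega] at hFS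
        exact derive P n φ hS (memPR7 φ n hφ ht') (Set.empty_inter S)
          (Set.singleton_subset_iff.mpr (hfbg g hgf n le_rfl hFS)) rfl
      exact ⟨fun hmem => forwardB P n φ S acts hS hocc _ hφ hbk hfbg χ hχ t hmem,
        hbk χ hχ t ht⟩
  | conj a b iha ihb =>
      intro hφ χ hχ t ht
      have haφ : a ∈ φ.subf := bdf_subf_trans φ _ hφ a
        (List.mem_cons_of_mem _ (List.mem_append_left _ (bdf_mem_subf_self a)))
      have hbφ : b ∈ φ.subf := bdf_subf_trans φ _ hφ b
        (List.mem_cons_of_mem _ (List.mem_append_right _ (bdf_mem_subf_self b)))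
      have hbk : ∀ χ' ∈ (BDF.conj a b).subf, ∀ t' ≤ n,
          Sat χ' ((STraj n S acts).suffix t') → PrefAtom.sat χ' t' ∈ S := by
        intro χ' hχ' t' ht'
        simp only [BDF.subf, List.mem_cons, List.mem_append] at hχ'
        rcases hχ' with rfl | hχ' | hχ'
        · intro hsat
          have h1 := (iha haφ a (bdf_mem_subf_self a) t' ht').mpr hsat.1
          have h2 := (ihb hbφ b (bdf_mem_subf_self b) t' ht').mpr hsat.2
          exact derive P n φ hS (memPR8 φ n hφ ht') (Set.empty_inter S)
            (Set.insert_subset_iff.mpr ⟨h1, Set.singleton_subset_iff.mpr h2⟩) rfl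
        · exact fun hsat => (iha haφ χ' hχ' t' ht').mpr hsat
        · exact fun hsat => (ihb hbφ χ' hχ' t' ht').mpr hsat
      exact ⟨fun hmem => forwardB P n φ S acts hS hocc _ hφ hbk hfbg χ hχ t hmem,
        hbk χ hχ t ht⟩
  | disj a b iha ihb =>
      intro hφ χ hχ t ht
      have haφ : a ∈ φ.subf := bdf_subf_trans φ _ hφ a
        (List.mem_cons_of_mem _ (List.mem_append_left _ (bdf_mem_subf_self a)))
      have hbφ : b ∈ φ.subf := bdf_subf_trans φ _ hφ b
        (List.mem_cons_of_mem _ (List.mem_append_right _ (bdf_mem_subf_self b)))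
      have hbk : ∀ χ' ∈ (BDF.disj a b).subf, ∀ t' ≤ n,
          Sat χ' ((STraj n S acts).suffix t') → PrefAtom.sat χ' t' ∈ S := by
        intro χ' hχ' t' ht'
        simp only [BDF.subf, List.mem_cons, List.mem_append] at hχ'
        rcases hχ' with rfl | hχ' | hχ'
        · intro hsat
          have hsat' : Sat a ((STraj n S acts).suffix t') ∨
              Sat b ((STraj n S acts).suffix t') := hsat
          rcases hsat' with hsat' | hsat'
          · exact derive P n φ hS (memPR9l φ n hφ ht') (Set.empty_inter S)
              (Set.singleton_subset_iff.mpr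
                ((iha haφ a (bdf_mem_subf_self a) t' ht').mpr hsat')) rfl
          · exact derive P n φ hS (memPR9r φ n hφ ht') (Set.empty_inter S)
              (Set.singleton_subset_iff.mpr
                ((ihb hbφ b (bdf_mem_subf_self b) t' ht').mpr hsat')) rfl
        · exact fun hsat => (iha haφ χ' hχ' t' ht').mpr hsat
        · exact fun hsat => (ihb hbφ χ' hχ' t' ht').mpr hsat
      exact ⟨fun hmem => forwardB P n φ S acts hS hocc _ hφ hbk hfbg χ hχ t hmem,
        hbk χ hχ t ht⟩
  | bneg a iha =>
      intro hφ χ hχ t ht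
      have haφ : a ∈ φ.subf := bdf_subf_trans φ _ hφ a
        (List.mem_cons_of_mem _ (bdf_mem_subf_self a))
      have hbka : ∀ χ' ∈ a.subf, ∀ t' ≤ n,
          Sat χ' ((STraj n S acts).suffix t') → PrefAtom.sat χ' t' ∈ S :=
        fun χ' hχ' t' ht' hsat => (iha haφ χ' hχ' t' ht').mpr hsat
      have hbk : ∀ χ' ∈ (BDF.bneg a).subf, ∀ t' ≤ n,
          Sat χ' ((STraj n S acts).suffix t') → PrefAtom.sat χ' t' ∈ S := by
        intro χ' hχ' t' ht'
        simp only [BDF.subf, List.mem_cons] at hχ'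
        rcases hχ' with rfl | hχ'
        · intro hsat
          have hsat' : ¬ Sat a ((STraj n S acts).suffix t') := hsat
          have hna : PrefAtom.sat a t' ∉ S := fun hmem =>
            hsat' (forwardB P n φ S acts hS hocc a haφ hbka hfbg a
              (bdf_mem_subf_self a) t' hmem)
          exact derive P n φ hS (memPR10 φ n hφ ht')
            (Set.singleton_inter_eq_empty.mpr hna) (Set.empty_subset S) rfl
        · exact fun hsat => (iha haφ χ' hχ' t' ht').mpr hsat
      exact ⟨fun hmem => forwardB P n φ S acts hS hocc _ hφ hbk hfbg χ hχ t hmem,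
        hbk χ hχ t ht⟩
  | next a iha =>
      intro hφ χ hχ t ht
      have haφ : a ∈ φ.subf := bdf_subf_trans φ _ hφ a
        (List.mem_cons_of_mem _ (bdf_mem_subf_self a))
      have hbk : ∀ χ' ∈ (BDF.next a).subf, ∀ t' ≤ n,
          Sat χ' ((STraj n S acts).suffix t') → PrefAtom.sat χ' t' ∈ S := by
        intro χ' hχ' t' ht'
        simp only [BDF.subf, List.mem_cons] at hχ'
        rcases hχ' with rfl | hχ'
        · intro hsat
          obtain ⟨h1, h2⟩ := hsat
          have h1' : 0 < n - t' := h1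
          rw [ptraj_suffix_suffix] at h2
          have hS2 := (iha haφ a (bdf_mem_subf_self a) (t' + 1) (by omega)).mpr h2
          exact derive P n φ hS (memPR11 φ n hφ (show t' < n by omega))
            (Set.empty_inter S) (Set.singleton_subset_iff.mpr hS2) rfl
        · exact fun hsat => (iha haφ χ' hχ' t' ht').mpr hsat
      exact ⟨fun hmem => forwardB P n φ S acts hS hocc _ hφ hbk hfbg χ hχ t hmem,
        hbk χ hχ t ht⟩
  | untl a b iha ihb =>
      intro hφ χ hχ t ht
      have haφ : a ∈ φ.subf := bdf_subf_trans φ _ hφ a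
        (List.mem_cons_of_mem _ (List.mem_append_left _ (bdf_mem_subf_self a)))
      have hbφ : b ∈ φ.subf := bdf_subf_trans φ _ hφ b
        (List.mem_cons_of_mem _ (List.mem_append_right _ (bdf_mem_subf_self b)))
      have hbk : ∀ χ' ∈ (BDF.untl a b).subf, ∀ t' ≤ n,
          Sat χ' ((STraj n S acts).suffix t') → PrefAtom.sat χ' t' ∈ S := by
        intro χ' hχ' t' ht'
        simp only [BDF.subf, List.mem_cons, List.mem_append] at hχ'
        rcases hχ' with rfl | hχ' | hχ'
        · intro hsat
          obtain ⟨i, hi, hA, hB⟩ := hsat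
          have hi' : i ≤ n - t' := hi
          rw [ptraj_suffix_suffix] at hB
          have hBS := (ihb hbφ b (bdf_mem_subf_self b) (t' + i) (by omega)).mpr hB
          refine derive P n φ hS
            (memPR12 φ n hφ ht' (show t' ≤ t' + i by omega) (show t' + i ≤ n by omega))
            (Set.empty_inter S) ?_ rfl
          refine Set.insert_subset_iff.mpr ⟨hBS, ?_⟩
          rintro x ⟨j, hj1, hj2, rfl⟩
          have hji := hA (j - t') (show j - t' < i by omega)
          rw [ptraj_suffix_suffix, show t' + (j - t') = j from by omega] at hji
          exact (iha haφ a (bdf_mem_subf_self a) j (by omega)).mpr hji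
        · exact fun hsat => (iha haφ χ' hχ' t' ht').mpr hsat
        · exact fun hsat => (ihb hbφ χ' hχ' t' ht').mpr hsat
      exact ⟨fun hmem => forwardB P n φ S acts hS hocc _ hφ hbk hfbg χ hχ t hmem,
        hbk χ hχ t ht⟩
  | always a iha =>
      intro hφ χ hχ t ht
      have haφ : a ∈ φ.subf := bdf_subf_trans φ _ hφ a
        (List.mem_cons_of_mem _ (bdf_mem_subf_self a))
      have hbk : ∀ χ' ∈ (BDF.always a).subf, ∀ t' ≤ n,
          Sat χ' ((STraj n S acts).suffix t') → PrefAtom.sat χ' t' ∈ S := by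
        intro χ' hχ' t' ht'
        simp only [BDF.subf, List.mem_cons] at hχ'
        rcases hχ' with rfl | hχ'
        · intro hsat
          refine derive P n φ hS (memPR13 φ n hφ ht') (Set.empty_inter S) ?_ rfl
          rintro x ⟨j, hj1, hj2, rfl⟩
          have hji := hsat (j - t') (show j - t' < n - t' by omega)
          rw [ptraj_suffix_suffix, show t' + (j - t') = j from by omega] at hji
          exact (iha haφ a (bdf_mem_subf_self a) j (by omega)).mpr hji
        · exact fun hsat => (iha haφ χ' hχ' t' ht').mpr hsat
      exact ⟨fun hmem => forwardB P n φ S acts hS hocc _ hφ hbk hfbg χ hχ t hmem,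
        hbk χ hχ t ht⟩
  | eventually a iha =>
      intro hφ χ hχ t ht
      have haφ : a ∈ φ.subf := bdf_subf_trans φ _ hφ a
        (List.mem_cons_of_mem _ (bdf_mem_subf_self a))
      have hbk : ∀ χ' ∈ (BDF.eventually a).subf, ∀ t' ≤ n,
          Sat χ' ((STraj n S acts).suffix t') → PrefAtom.sat χ' t' ∈ S := by
        intro χ' hχ' t' ht'
        simp only [BDF.subf, List.mem_cons] at hχ'
        rcases hχ' with rfl | hχ'
        · intro hsat
          obtain ⟨i, hi, hA⟩ := hsat
          have hi' : i ≤ n - t' := hi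
          rw [ptraj_suffix_suffix] at hA
          have hAS := (iha haφ a (bdf_mem_subf_self a) (t' + i) (by omega)).mpr hA
          exact derive P n φ hS
            (memPR14 φ n hφ ht' (show t' ≤ t' + i by omega) (show t' + i ≤ n by omega))
            (Set.empty_inter S) (Set.singleton_subset_iff.mpr hAS) rfl
        · exact fun hsat => (iha haφ χ' hχ' t' ht').mpr hsat
      exact ⟨fun hmem => forwardB P n φ S acts hS hocc _ hφ hbk hfbg χ hχ t hmem,
        hbk χ hχ t ht⟩
/-- **Correctness of the preference encoding**: for an answer set `S` of
`Π(P,n) ∪ Π(φ) ∪ Π_pref`, `holds(sat(φ),0) ∈ S` iff the trajectory encoded by `S`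
satisfies the basic desire formula `φ`. -/
theorem sat_encoding_correctness {F A : Type}
    (P : PlanningProblem F A) (n : ℕ) (hcons : ConsistentTheory P)
    (φ : BDF F A) (S : Set (PrefAtom F A))
    (hS : AnswerSet (PiPrefProgram P n φ) S)
    (acts : ℕ → A) (hocc : ∀ i < n, PrefAtom.occ (acts i) i ∈ S) :
    PrefAtom.sat φ 0 ∈ S ↔
      Sat φ ⟨n, fun i => { l | PrefAtom.holds l i ∈ S }, acts⟩ := by
  have h := claimB P n φ S acts hS hocc φ (bdf_mem_subf_self φ) φ (bdf_mem_subf_self φ)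
    0 (Nat.zero_le n)
  rw [ptraj_suffix_zero] at h
  exact h
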